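/- Let λ, μ, ν, ω be real numbers with λ ≠ 0 and ν ≠ 0, and define u(ξ) = −(3μ²/(25λν)) [1 − tanh(μξ/(10ν))]² + (6μ² − 25ων)/(25λν). Then u satisfies the traveling-wave KdV–Burgers ODE ω u' + λ u u' + μ u'' + ν u''' = 0 for all ξ ∈ ℝ. -/

import Mathlib

lemma my_hasDerivAt_tanh (x : ℝ) :
    HasDerivAt Real.tanh (1 - Real.tanh x ^ 2) x := by
  have hc : Real.cosh x ≠ 0 := (Real.cosh_pos (x:=x)).ne'
  have h : HasDerivAt (fun y => Real.sinh y / Real.cosh y)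
      ((Real.cosh x * Real.cosh x - Real.sinh x * Real.sinh x) / Real.cosh x ^ 2) x :=
    (Real.hasDerivAt_sinh x).div (Real.hasDerivAt_cosh x) hc
  have hfun : Real.tanh = fun y => Real.sinh y / Real.cosh y :=
    funext fun y => Real.tanh_eq_sinh_div_cosh y
  rw [hfun]
  convert h using 1
  have hid : Real.cosh x ^ 2 - Real.sinh x ^ 2 = 1 := Real.cosh_sq_sub_sinh_sq x
  simp only
  field_simp

theorem kdv_burgers_tanh_solution
    (lam mu nu omega : ℝ) (hlam : lam ≠ 0) (hnu : nu ≠ 0) (u : ℝ → ℝ)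
    (hu : ∀ ξ, u ξ =
      -(3 * mu ^ 2 / (25 * lam * nu)) * (1 - Real.tanh (mu * ξ / (10 * nu))) ^ 2
        + (6 * mu ^ 2 - 25 * omega * nu) / (25 * lam * nu))
    (ξ : ℝ) :
    omega * deriv u ξ + lam * u ξ * deriv u ξ + mu * deriv (deriv u) ξ
      + nu * deriv (deriv (deriv u)) ξ = 0 := by
  set A : ℝ := -(3 * mu ^ 2 / (25 * lam * nu)) with hA
  set B : ℝ := (6 * mu ^ 2 - 25 * omega * nu) / (25 * lam * nu) with hB
  set c : ℝ := mu / (10 * nu) with hc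
  set T : ℝ → ℝ := fun x => Real.tanh (mu * x / (10 * nu)) with hTdef
  have hT : ∀ x, HasDerivAt T ((1 - T x ^ 2) * c) x := by
    intro x
    have h0 : HasDerivAt (fun y : ℝ => mu * y / (10 * nu)) c x := by
      simpa [hc, mul_comm] using ((hasDerivAt_id x).const_mul mu).div_const (10 * nu)
    exact (my_hasDerivAt_tanh _).comp x h0
  have hu'' : u = fun x => A * (1 - T x) ^ 2 + B := funext fun x => hu x
  -- first derivative
  have h1 : ∀ x, HasDerivAt u (-2 * A * c * ((1 - T x) * (1 - T x ^ 2))) x := by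
    intro x
    have h := ((((hT x).const_sub 1).pow 2).const_mul A).add_const B
    rw [hu'']
    refine h.congr_deriv ?_
    push_cast
    ring
  have e1 : deriv u = fun x => -2 * A * c * ((1 - T x) * (1 - T x ^ 2)) :=
    funext fun x => (h1 x).deriv
  -- second derivative
  have h2 : ∀ x, HasDerivAt (fun x => -2 * A * c * ((1 - T x) * (1 - T x ^ 2)))
      (2 * A * c ^ 2 * ((1 - T x ^ 2) * (1 + 2 * T x - 3 * T x ^ 2))) x := by
    intro x
    have h := (((hT x).const_sub 1).mul (((hT x).pow 2).const_sub 1)).const_mul (-2 * A * c)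
    refine h.congr_deriv ?_
    simp only [Pi.pow_apply]
    push_cast
    ring
  have e2 : deriv (deriv u) = fun x =>
      2 * A * c ^ 2 * ((1 - T x ^ 2) * (1 + 2 * T x - 3 * T x ^ 2)) := by
    rw [e1]; exact funext fun x => (h2 x).deriv
  -- third derivative
  have h3 : ∀ x, HasDerivAt (fun x =>
      2 * A * c ^ 2 * ((1 - T x ^ 2) * (1 + 2 * T x - 3 * T x ^ 2)))
      (2 * A * c ^ 3 * ((1 - T x ^ 2) * (2 - 8 * T x - 6 * T x ^ 2 + 12 * T x ^ 3))) x := by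
    intro x
    have ha : HasDerivAt (fun x => 1 - T x ^ 2) (-(2 * T x ^ 1 * ((1 - T x ^ 2) * c))) x :=
      ((hT x).pow 2).const_sub 1
    have hb : HasDerivAt (fun x => 1 + 2 * T x - 3 * T x ^ 2)
        (2 * ((1 - T x ^ 2) * c) - 3 * (2 * T x ^ 1 * ((1 - T x ^ 2) * c))) x :=
      (((hT x).const_mul 2).const_add 1).sub (((hT x).pow 2).const_mul 3)
    have h := (ha.mul hb).const_mul (2 * A * c ^ 2)
    refine h.congr_deriv ?_
    ring
  have e3 : deriv (deriv (deriv u)) ξ =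
      2 * A * c ^ 3 * ((1 - T ξ ^ 2) * (2 - 8 * T ξ - 6 * T ξ ^ 2 + 12 * T ξ ^ 3)) := by
    rw [e2]; exact (h3 ξ).deriv
  rw [hu ξ, e3, e2, e1]
  simp only
  set t : ℝ := T ξ with ht
  have h2' : Real.tanh (mu * ξ / (10 * nu)) = t := rfl
  rw [h2', hA, hB, hc]
  have h25 : (25 : ℝ) * lam * nu ≠ 0 := by
    intro h; rcases mul_eq_zero.mp h with h | h
    · rcases mul_eq_zero.mp h with h | h
      · norm_num at h
      · exact hlam h
    · exact hnu h
  field_simp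
  ring
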